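/- For every connected simple graph G, there exists a connected induced subgraph H of G such that α(H) = α(G) and |V(H)| ≤ 2·α(G) − 1. -/

import Mathlib

/-- A set of vertices is independent: pairwise nonadjacent. -/
def IndepSet {V : Type*} (G : SimpleGraph V) (s : Set V) : Prop :=
  s.Pairwise fun u v => ¬ G.Adj u v

/-- The independence number of a graph: the maximum size of an independent set. -/
noncomputable def indepNum {V : Type*} (G : SimpleGraph V) : ℕ :=
  sSup {n | ∃ t : Finset V, IndepSet G ↑t ∧ t.card = n}

/-- An edge-colored graph is properly connected if between every pair of distinct
vertices there is a path in which no two consecutive edges have the same color. -/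
def ProperlyConnected {V : Type*} (G : SimpleGraph V) (c : Sym2 V → ℕ) : Prop :=
  ∀ u v : V, u ≠ v → ∃ p : G.Walk u v, p.IsPath ∧ (p.edges.map c).Chain' (· ≠ ·)

/-- The optimal proper connection number of a monochromatic graph `G` (all edges
initially colored `1`): the minimum of `p + q` over all final colorings `c` making
`G` properly connected, where `p` is the number of recolored edges (edges whose
color is no longer `1`) and `q` is the number of distinct new colors used. -/
noncomputable def pcOpt {V : Type*} (G : SimpleGraph V) : ℕ :=
  sInf {n | ∃ c : Sym2 V → ℕ, ProperlyConnected G c ∧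
    n = {e | e ∈ G.edgeSet ∧ c e ≠ 1}.ncard
      + (c '' {e | e ∈ G.edgeSet ∧ c e ≠ 1}).ncard}

/-- The degree of a vertex. -/
noncomputable def vdeg {V : Type*} (G : SimpleGraph V) (v : V) : ℕ :=
  (G.neighborSet v).ncard

/-- The maximum degree of a graph. -/
noncomputable def maxDeg {V : Type*} (G : SimpleGraph V) : ℕ :=
  sSup {n | ∃ v, vdeg G v = n}

/-- A connected graph is α-minimal if every vertex is either a cut-vertex or its
deletion decreases the independence number. -/
def AlphaMinimal {V : Type*} (G : SimpleGraph V) : Prop :=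
  G.Connected ∧ ∀ v : V,
    ¬ (G.induce ({v}ᶜ : Set V)).Connected ∨
      indepNum (G.induce ({v}ᶜ : Set V)) < indepNum G


set_option linter.unusedSectionVars false
set_option linter.unusedVariables false

namespace AlphaAux

variable {V : Type*} (G : SimpleGraph V) [DecidableEq V]

/-- Step relation within a finset. -/
def Stp (s : Finset V) (a b : V) : Prop := a ∈ s ∧ b ∈ s ∧ G.Adj a b

/-- Reachability within a finset. -/
def RW (s : Finset V) : V → V → Prop := Relation.ReflTransGen (Stp G s)

/-- Connectivity of the induced subgraph on a finset. -/
def Conn (s : Finset V) : Prop := s.Nonempty ∧ ∀ a ∈ s, ∀ b ∈ s, RW G s a b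

/-- Independence of a finset. -/
def Ind (t : Finset V) : Prop := ∀ a ∈ t, ∀ b ∈ t, a ≠ b → ¬ G.Adj a b

open scoped Classical in
/-- Independence number of the induced subgraph on a finset. -/
noncomputable def alph (s : Finset V) : ℕ :=
  (s.powerset.filter fun t => Ind G t).sup Finset.card

open scoped Classical in
/-- Connected component of `a` within `s`. -/
noncomputable def comp (s : Finset V) (a : V) : Finset V := s.filter fun b => RW G s a b

open scoped Classical in
/-- Removable vertices: non-cut and preserving the independence number. -/
noncomputable def Erem (s : Finset V) : Finset V :=
  s.filter fun z => Conn G (s.erase z) ∧ alph G (s.erase z) = alph G s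

variable {G}

lemma rw_mono {s t : Finset V} (hst : s ⊆ t) {a b : V} (h : RW G s a b) : RW G t a b :=
  Relation.ReflTransGen.mono (p := Stp G t) (fun _ _ hx => ⟨hst hx.1, hst hx.2.1, hx.2.2⟩) _ _ h

lemma rw_symm {s : Finset V} {a b : V} (h : RW G s a b) : RW G s b a :=
  by haveI : Std.Symm (Stp G s) := ⟨fun _ _ hx => ⟨hx.2.1, hx.1, hx.2.2.symm⟩⟩; exact Std.Symm.symm (r := Relation.ReflTransGen (Stp G s)) _ _ h

lemma conn_of_reach {s : Finset V} {c : V} (hc : c ∈ s) (h : ∀ b ∈ s, RW G s b c) :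
    Conn G s :=
  ⟨⟨c, hc⟩, fun a ha b hb => (h a ha).trans (rw_symm (h b hb))⟩

lemma exists_adj {s : Finset V} (hs : Conn G s) (h2 : 2 ≤ s.card) {a : V} (ha : a ∈ s) :
    ∃ b ∈ s, G.Adj a b := by
  obtain ⟨b, hb, hba⟩ := Finset.exists_mem_ne (show 1 < s.card by omega) a
  have := hs.2 a ha b hb
  rcases (Relation.ReflTransGen.cases_head this) with rfl | ⟨c, hc, -⟩
  · exact absurd rfl hba
  · exact ⟨c, hc.2.1, hc.2.2⟩

lemma mem_comp {s : Finset V} {a b : V} : b ∈ comp G s a ↔ b ∈ s ∧ RW G s a b := by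
  simp [comp]

lemma comp_subset {s : Finset V} {a : V} : comp G s a ⊆ s := by
  intro b hb; exact (mem_comp.mp hb).1

lemma mem_comp_self {s : Finset V} {a : V} (ha : a ∈ s) : a ∈ comp G s a :=
  mem_comp.mpr ⟨ha, Relation.ReflTransGen.refl⟩

lemma rw_comp {s : Finset V} {a b : V} (ha : a ∈ s) (h : RW G s a b) :
    RW G (comp G s a) a b := by
  induction h with
  | refl => exact Relation.ReflTransGen.refl
  | @tail b c hab hbc ih =>
      exact ih.tail ⟨mem_comp.mpr ⟨hbc.1, hab⟩, mem_comp.mpr ⟨hbc.2.1, hab.tail hbc⟩, hbc.2.2⟩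

lemma conn_comp {s : Finset V} {a : V} (ha : a ∈ s) : Conn G (comp G s a) := by
  refine conn_of_reach (mem_comp_self ha) ?_
  intro b hb
  exact rw_symm (rw_comp ha (mem_comp.mp hb).2)

lemma comp_eq {s : Finset V} {a b : V} (hb : b ∈ comp G s a) : comp G s a = comp G s b := by
  obtain ⟨hbs, hab⟩ := mem_comp.mp hb
  ext c
  simp only [mem_comp]
  exact ⟨fun h => ⟨h.1, (rw_symm hab).trans h.2⟩, fun h => ⟨h.1, hab.trans h.2⟩⟩

lemma not_adj_comp {s : Finset V} {a b c : V} (hb : b ∈ comp G s a) (hc : c ∈ s)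
    (hnc : c ∉ comp G s a) : ¬ G.Adj b c := by
  intro hadj
  obtain ⟨hbs, hab⟩ := mem_comp.mp hb
  exact hnc (mem_comp.mpr ⟨hc, hab.tail ⟨hbs, hc, hadj⟩⟩)

lemma firsthit {s : Finset V} {v a : V} (hav : a ≠ v) (h : RW G s a v) :
    ∃ u ∈ s.erase v, RW G (s.erase v) a u ∧ G.Adj u v := by
  have key : ∀ {b}, RW G s a b →
      (b ≠ v ∧ RW G (s.erase v) a b) ∨ (∃ u ∈ s.erase v, RW G (s.erase v) a u ∧ G.Adj u v) := by
    intro b hb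
    induction hb with
    | refl => exact Or.inl ⟨hav, Relation.ReflTransGen.refl⟩
    | @tail b c hab hbc ih =>
        rcases ih with ⟨hbv, hab'⟩ | h'
        · rcases eq_or_ne c v with rfl | hcv
          · exact Or.inr ⟨b, Finset.mem_erase.mpr ⟨hbv, hbc.1⟩, hab', hbc.2.2⟩
          · exact Or.inl ⟨hcv, hab'.tail
              ⟨Finset.mem_erase.mpr ⟨hbv, hbc.1⟩, Finset.mem_erase.mpr ⟨hcv, hbc.2.1⟩, hbc.2.2⟩⟩
        · exact Or.inr h'
  rcases key h with ⟨hvv, -⟩ | h'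
  · exact absurd rfl hvv
  · exact h'

lemma ind_subset {t t' : Finset V} (h : t ⊆ t') (h' : Ind G t') : Ind G t :=
  fun a ha b hb hab => h' a (h ha) b (h hb) hab

lemma alph_le {s t : Finset V} (hts : t ⊆ s) (ht : Ind G t) : t.card ≤ alph G s := by
  classical
  refine Finset.le_sup ?_
  simp only [Finset.mem_filter, Finset.mem_powerset]
  exact ⟨hts, ht⟩

lemma exists_alph (G : SimpleGraph V) (s : Finset V) :
    ∃ t, t ⊆ s ∧ Ind G t ∧ t.card = alph G s := by
  classical
  have hne : (s.powerset.filter fun t => Ind G t).Nonempty :=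
    ⟨∅, Finset.mem_filter.mpr ⟨Finset.empty_mem_powerset _, by simp [Ind]⟩⟩
  obtain ⟨t, ht, hts⟩ := Finset.exists_mem_eq_sup _ hne Finset.card
  simp only [Finset.mem_filter, Finset.mem_powerset] at ht
  exact ⟨t, ht.1, ht.2, hts.symm⟩

lemma alph_mono {s t : Finset V} (h : s ⊆ t) : alph G s ≤ alph G t := by
  obtain ⟨u, hus, hui, huc⟩ := exists_alph G s
  exact huc ▸ alph_le (hus.trans h) hui

lemma one_le_alph {s : Finset V} (hs : s.Nonempty) : 1 ≤ alph G s := by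
  obtain ⟨a, ha⟩ := hs
  have : ({a} : Finset V).card ≤ alph G s := by
    refine alph_le (by simpa) ?_
    intro x hx y hy hxy
    simp only [Finset.mem_singleton] at hx hy
    exact absurd (hx.trans hy.symm) hxy
  simpa using this

lemma mem_Erem {s : Finset V} {z : V} :
    z ∈ Erem G s ↔ z ∈ s ∧ Conn G (s.erase z) ∧ alph G (s.erase z) = alph G s := by
  simp [Erem]

end AlphaAux

-- bridges (to be appended after chunk1 content, inside namespace AlphaAux)
namespace AlphaAux
variable {V : Type*} (G : SimpleGraph V) [DecidableEq V]
variable {G}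

lemma induce_rtg_to_rw {s : Finset V} {x y : (↑s : Set V)}
    (h : Relation.ReflTransGen (G.induce (↑s : Set V)).Adj x y) : RW G s ↑x ↑y := by
  induction h with
  | refl => exact Relation.ReflTransGen.refl
  | @tail b c hab e ih =>
      refine ih.tail ⟨Finset.mem_coe.mp b.2, Finset.mem_coe.mp c.2, ?_⟩
      simpa using e

lemma rw_to_reachable {s : Finset V} {a b : V} (h : RW G s a b) :
    ∀ (ha : a ∈ (↑s : Set V)) (hb : b ∈ (↑s : Set V)),
      (G.induce (↑s : Set V)).Reachable ⟨a, ha⟩ ⟨b, hb⟩ := by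
  induction h with
  | refl => intro ha hb; exact SimpleGraph.Reachable.refl _
  | @tail b c hab hbc ih =>
      intro ha hc
      have hb : b ∈ (↑s : Set V) := Finset.mem_coe.mpr hbc.1
      refine (ih ha hb).trans (SimpleGraph.Adj.reachable ?_)
      simpa using hbc.2.2

lemma conn_iff (s : Finset V) : (G.induce (↑s : Set V)).Connected ↔ Conn G s := by
  constructor
  · intro hc
    obtain ⟨⟨x0, hx0⟩⟩ := hc.nonempty
    refine ⟨⟨x0, Finset.mem_coe.mp hx0⟩, ?_⟩
    intro a ha b hb
    have h := hc.preconnected ⟨a, Finset.mem_coe.mpr ha⟩ ⟨b, Finset.mem_coe.mpr hb⟩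
    rw [SimpleGraph.reachable_iff_reflTransGen] at h
    exact induce_rtg_to_rw h
  · rintro ⟨⟨x0, hx0⟩, hr⟩
    have hne : Nonempty (↑s : Set V) := ⟨⟨x0, Finset.mem_coe.mpr hx0⟩⟩
    refine SimpleGraph.Connected.mk ?_
    rintro ⟨x, hx⟩ ⟨y, hy⟩
    exact rw_to_reachable (hr x (Finset.mem_coe.mp hx) y (Finset.mem_coe.mp hy)) hx hy

lemma indepNum_induce (s : Finset V) : indepNum (G.induce (↑s : Set V)) = alph G s := by
  classical
  set S := {n | ∃ t : Finset (↑s : Set V), IndepSet (G.induce (↑s : Set V)) ↑t ∧ t.card = n} with hS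
  have hub : ∀ n ∈ S, n ≤ alph G s := by
    rintro n ⟨t, hti, rfl⟩
    have h1 : (t.image (Subtype.val)).card = t.card :=
      Finset.card_image_of_injective _ Subtype.val_injective
    rw [← h1]
    refine alph_le ?_ ?_
    · intro u hu
      obtain ⟨x, hx, rfl⟩ := Finset.mem_image.mp hu
      exact Finset.mem_coe.mp x.2
    · intro a ha b hb hab hadj
      obtain ⟨x, hx, rfl⟩ := Finset.mem_image.mp ha
      obtain ⟨y, hy, rfl⟩ := Finset.mem_image.mp hb
      have hxy : x ≠ y := fun h => hab (by rw [h])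
      exact hti (Finset.mem_coe.mpr hx) (Finset.mem_coe.mpr hy) hxy (by simpa using hadj)
  have hmem : alph G s ∈ S := by
    obtain ⟨t, hts, hti, htc⟩ := exists_alph G s
    refine ⟨t.attach.map ⟨fun x => (⟨x.1, Finset.mem_coe.mpr (hts x.2)⟩ : (↑s : Set V)),
      by intro x y hxy; have h := congrArg Subtype.val hxy; exact Subtype.ext h⟩, ?_, by simp [htc]⟩
    rintro ⟨a, haU⟩ ha ⟨b, hbU⟩ hb hab
    simp only [Finset.coe_map, Set.mem_image, Finset.mem_coe, Finset.mem_attach,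
      Function.Embedding.coeFn_mk] at ha hb
    obtain ⟨⟨a0, ha0⟩, -, ha1⟩ := ha
    obtain ⟨⟨b0, hb0⟩, -, hb1⟩ := hb
    have haa : a0 = a := congrArg Subtype.val ha1
    have hbb : b0 = b := congrArg Subtype.val hb1
    subst haa; subst hbb
    have : a0 ≠ b0 := fun h => hab (Subtype.ext h)
    simpa using hti a0 ha0 b0 hb0 this
  exact le_antisymm (csSup_le ⟨_, hmem⟩ hub) (le_csSup ⟨alph G s, hub⟩ hmem)

lemma indepSet_coe_iff {t : Finset V} : IndepSet G ↑t ↔ Ind G t := by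
  constructor
  · intro h a ha b hb hab
    exact h (Finset.mem_coe.mpr ha) (Finset.mem_coe.mpr hb) hab
  · intro h a ha b hb hab
    exact h a (Finset.mem_coe.mp ha) b (Finset.mem_coe.mp hb) hab

lemma indepNum_eq_alph_univ [Fintype V] : indepNum G = alph G (Finset.univ : Finset V) := by
  classical
  set S := {n | ∃ t : Finset V, IndepSet G ↑t ∧ t.card = n} with hS
  have hub : ∀ n ∈ S, n ≤ alph G (Finset.univ : Finset V) := by
    rintro n ⟨t, hti, rfl⟩
    exact alph_le (Finset.subset_univ t) (indepSet_coe_iff.mp hti)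
  have hmem : alph G (Finset.univ : Finset V) ∈ S := by
    obtain ⟨t, -, hti, htc⟩ := exists_alph G (Finset.univ : Finset V)
    exact ⟨t, indepSet_coe_iff.mpr hti, htc⟩
  exact le_antisymm (csSup_le ⟨_, hmem⟩ hub) (le_csSup ⟨_, hub⟩ hmem)

lemma conn_univ [Fintype V] (hG : G.Connected) : Conn G (Finset.univ : Finset V) := by
  have : Nonempty V := hG.nonempty
  refine ⟨Finset.univ_nonempty, fun a _ b _ => ?_⟩
  have h := hG.preconnected a b
  rw [SimpleGraph.reachable_iff_reflTransGen] at h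
  exact Relation.ReflTransGen.mono (p := Stp G Finset.univ) (fun x y hxy => ⟨Finset.mem_univ _, Finset.mem_univ _, hxy⟩) _ _ h

end AlphaAux

namespace AlphaAux
variable {V : Type*} {G : SimpleGraph V} [DecidableEq V]

lemma conn_insert {s : Finset V} {u a : V} (hs : Conn G s) (hu : u ∈ s) (hadj : G.Adj a u) :
    Conn G (insert a s) := by
  refine conn_of_reach (c := u) (Finset.mem_insert_of_mem hu) ?_
  intro b hb
  rcases Finset.mem_insert.mp hb with rfl | hbs
  · exact Relation.ReflTransGen.single
      ⟨Finset.mem_insert_self _ _, Finset.mem_insert_of_mem hu, hadj⟩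
  · exact rw_mono (Finset.subset_insert _ _) (hs.2 b hbs u hu)

theorem mainBound : ∀ (n : ℕ) (s : Finset V), s.card ≤ n → Conn G s →
    s.card + 1 ≤ 2 * alph G s + (Erem G s).card := by
  intro n
  induction n with
  | zero =>
      intro s hc hs
      obtain ⟨a, ha⟩ := hs.1
      rw [Nat.le_zero, Finset.card_eq_zero] at hc
      simp [hc] at ha
  | succ n ih =>
    intro s hcard hs
    by_cases h2 : s.card ≤ 1
    · have h1 := one_le_alph (G := G) hs.1
      omega
    push_neg at h2
    by_cases hE : (Erem G s).Nonempty
    · -- delete a removable vertex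
      obtain ⟨z, hz⟩ := hE
      rw [mem_Erem] at hz
      obtain ⟨hzs, hzc, hza⟩ := hz
      have hihyp := ih (s.erase z) (by rw [Finset.card_erase_of_mem hzs]; omega) hzc
      have hsub : Erem G (s.erase z) ⊆ (Erem G s).erase z := by
        intro y hy
        rw [mem_Erem] at hy
        obtain ⟨hy1, hy2, hy3⟩ := hy
        have hyz : y ≠ z := (Finset.mem_erase.mp hy1).1
        have hys : y ∈ s := (Finset.mem_erase.mp hy1).2
        refine Finset.mem_erase.mpr ⟨hyz, mem_Erem.mpr ⟨hys, ?_, ?_⟩⟩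
        · -- connectivity of s.erase y
          have hzy : z ∈ s.erase y := Finset.mem_erase.mpr ⟨fun h => hyz h.symm, hzs⟩
          have hkey : ∃ u ∈ (s.erase z).erase y, G.Adj z u := by
            by_contra hno
            push_neg at hno
            obtain ⟨t, hts, hti, htc⟩ := exists_alph G ((s.erase z).erase y)
            have hzt : z ∉ t := fun h =>
              Finset.notMem_erase z s (Finset.mem_of_mem_erase (hts h))
            have hins : Ind G (insert z t) := by
              intro p hp q hq hpq
              rcases Finset.mem_insert.mp hp with rfl | hps
              · rcases Finset.mem_insert.mp hq with rfl | hqs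
                · exact absurd rfl hpq
                · exact hno q (hts hqs)
              · rcases Finset.mem_insert.mp hq with rfl | hqs
                · exact fun hadj => hno p (hts hps) hadj.symm
                · exact hti p hps q hqs hpq
            have hsub2 : insert z t ⊆ s := by
              intro u hu
              rcases Finset.mem_insert.mp hu with rfl | hut
              · exact hzs
              · exact Finset.mem_of_mem_erase (Finset.mem_of_mem_erase (hts hut))
            have hle := alph_le hsub2 hins
            rw [Finset.card_insert_of_notMem hzt, htc, hy3, hza] at hle
            omega
          obtain ⟨u, hu, hadj⟩ := hkey
          have hconn2 := conn_insert hy2 hu hadj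
          have heq : insert z ((s.erase z).erase y) = s.erase y := by
            rw [Finset.erase_right_comm]
            exact Finset.insert_erase hzy
          rwa [heq] at hconn2
        · -- alph equality
          refine le_antisymm (alph_mono (Finset.erase_subset _ _)) ?_
          have h5 : (s.erase z).erase y ⊆ s.erase y := fun u hu =>
            Finset.mem_erase.mpr ⟨(Finset.mem_erase.mp hu).1,
              Finset.mem_of_mem_erase ((Finset.mem_erase.mp hu).2)⟩
          calc alph G s = alph G ((s.erase z).erase y) := by rw [hy3, hza]
            _ ≤ alph G (s.erase y) := alph_mono h5
      have hzmem : z ∈ Erem G s := mem_Erem.mpr ⟨hzs, hzc, hza⟩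
      have hce : ((Erem G s).erase z).card + 1 = (Erem G s).card :=
        Finset.card_erase_add_one hzmem
      have h6 := Finset.card_le_card hsub
      rw [Finset.card_erase_of_mem hzs, hza] at hihyp
      omega
    · -- HARD CASE : no removable vertex
      have hEe : Erem G s = ∅ := Finset.not_nonempty_iff_eq_empty.mp hE
      have hPK : ∀ z ∈ s, Conn G (s.erase z) →
          ∀ t, t ⊆ s → Ind G t → t.card = alph G s → z ∈ t := by
        intro z hz hcz t hts hti htc
        by_contra hzt
        have hts' : t ⊆ s.erase z := fun u hu =>
          Finset.mem_erase.mpr ⟨fun h => hzt (h ▸ hu), hts hu⟩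
        have h1 : alph G (s.erase z) = alph G s :=
          le_antisymm (alph_mono (Finset.erase_subset _ _)) (htc ▸ alph_le hts' hti)
        have : z ∈ Erem G s := mem_Erem.mpr ⟨hz, hcz, h1⟩
        simp [hEe] at this
      have hcut : ∃ v ∈ s, ¬ Conn G (s.erase v) := by
        by_contra hno
        push_neg at hno
        obtain ⟨t, hts, hti, htc⟩ := exists_alph G s
        have hst : s ⊆ t := fun z hz => hPK z hz (hno z hz) t hts hti htc
        obtain ⟨a, ha⟩ := hs.1
        obtain ⟨b, hb, hadj⟩ := exists_adj hs (by omega) ha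
        exact hti a (hst ha) b (hst hb) (G.ne_of_adj hadj) hadj
      obtain ⟨v0, hv0, hcv0⟩ := hcut
      have hv0e : (s.erase v0).Nonempty := by
        rw [← Finset.card_pos, Finset.card_erase_of_mem hv0]; omega
      obtain ⟨a0, ha0⟩ := hv0e
      classical
      set P := (s ×ˢ s).filter (fun p => ¬ Conn G (s.erase p.1) ∧ p.2 ∈ s.erase p.1) with hP
      have hPne : P.Nonempty := ⟨(v0, a0), by
        simp only [hP, Finset.mem_filter, Finset.mem_product]
        exact ⟨⟨hv0, Finset.mem_of_mem_erase ha0⟩, hcv0, ha0⟩⟩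
      obtain ⟨⟨v, a⟩, hvaP, hmin⟩ :=
        Finset.exists_min_image P (fun p => (comp G (s.erase p.1) p.2).card) hPne
      simp only [hP, Finset.mem_filter, Finset.mem_product] at hvaP
      obtain ⟨⟨hvs, -⟩, hcv, has'⟩ := hvaP
      set A := comp G (s.erase v) a with hA
      have hAs' : A ⊆ s.erase v := comp_subset
      have haA : a ∈ A := mem_comp_self has'
      have hAnc : ∀ w ∈ A, Conn G (s.erase w) := by
        intro w hw
        by_contra hcw
        have hws' : w ∈ s.erase v := hAs' hw
        have hwv : w ≠ v := (Finset.mem_erase.mp hws').1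
        have hws : w ∈ s := (Finset.mem_erase.mp hws').2
        have hvw : v ∈ s.erase w := Finset.mem_erase.mpr ⟨fun h => hwv h.symm, hvs⟩
        have hexb : ∃ b ∈ s.erase w, ¬ RW G (s.erase w) b v := by
          by_contra hall
          push_neg at hall
          exact hcw (conn_of_reach hvw hall)
        obtain ⟨b, hbw, hbv⟩ := hexb
        have hCsub : comp G (s.erase w) b ⊆ A := by
          intro c hc
          by_contra hcA
          have hcw' : c ∈ s.erase w := comp_subset hc
          have hcs : c ∈ s := Finset.mem_of_mem_erase hcw'
          have hreach : RW G (s.erase w) c v := by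
            rcases eq_or_ne c v with rfl | hcv'
            · exact Relation.ReflTransGen.refl
            · have hcs' : c ∈ s.erase v := Finset.mem_erase.mpr ⟨hcv', hcs⟩
              have hwBc : w ∉ comp G (s.erase v) c := by
                intro hwc
                have hrw1 : RW G (s.erase v) a w := (mem_comp.mp hw).2
                have hrw2 : RW G (s.erase v) c w := (mem_comp.mp hwc).2
                exact hcA (mem_comp.mpr ⟨hcs', hrw1.trans (rw_symm hrw2)⟩)
              have hBcw : comp G (s.erase v) c ⊆ s.erase w := fun u hu =>
                Finset.mem_erase.mpr ⟨fun h => hwBc (h ▸ hu),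
                  Finset.mem_of_mem_erase (comp_subset hu)⟩
              obtain ⟨u, hu, huu, hadj⟩ := firsthit hcv' (hs.2 c hcs v hvs)
              have huBc : u ∈ comp G (s.erase v) c := mem_comp.mpr ⟨hu, huu⟩
              have hrcu : RW G (comp G (s.erase v) c) c u := rw_comp hcs' huu
              exact (rw_mono hBcw hrcu).tail ⟨hBcw huBc, hvw, hadj⟩
          have hbc : RW G (s.erase w) b c := (mem_comp.mp hc).2
          exact hbv (hbc.trans hreach)
        have hlt : (comp G (s.erase w) b).card < A.card := by
          refine Finset.card_lt_card ⟨hCsub, fun hsub' => ?_⟩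
          exact Finset.notMem_erase w s (comp_subset (hsub' hw))
        have hmem2 : (w, b) ∈ P := by
          simp only [hP, Finset.mem_filter, Finset.mem_product]
          exact ⟨⟨hws, Finset.mem_of_mem_erase hbw⟩, hcw, hbw⟩
        have hge := hmin (w, b) hmem2
        simp only at hge
        omega
      have hAind : ∀ w ∈ A, ∀ w' ∈ A, w ≠ w' → ¬ G.Adj w w' := by
        intro w hw w' hw' hne
        obtain ⟨t, hts, hti, htc⟩ := exists_alph G s
        have h1 := hPK w (Finset.mem_of_mem_erase (hAs' hw)) (hAnc w hw) t hts hti htc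
        have h2 := hPK w' (Finset.mem_of_mem_erase (hAs' hw')) (hAnc w' hw') t hts hti htc
        exact hti w h1 w' h2 hne
      have hcardA : A.card = 1 := by
        by_contra hne1
        have hge2 : 2 ≤ A.card := by
          have : 1 ≤ A.card := Finset.card_pos.mpr ⟨a, haA⟩
          omega
        obtain ⟨b, hb, hadj⟩ := exists_adj (conn_comp has') hge2 haA
        exact hAind a haA b hb (G.ne_of_adj hadj) hadj
      obtain ⟨x, hAx⟩ := Finset.card_eq_one.mp hcardA
      have hxA : x ∈ A := by rw [hAx]; exact Finset.mem_singleton_self x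
      have hxs' : x ∈ s.erase v := hAs' hxA
      have hxv : x ≠ v := (Finset.mem_erase.mp hxs').1
      have hxs : x ∈ s := (Finset.mem_erase.mp hxs').2
      have hxnb : ∀ u ∈ s, G.Adj x u → u = v := by
        intro u hu hadj
        by_contra huv
        have hus' : u ∈ s.erase v := Finset.mem_erase.mpr ⟨huv, hu⟩
        have huA : u ∉ A := by
          rw [hAx]
          simp only [Finset.mem_singleton]
          exact fun h => (G.ne_of_adj hadj) h.symm
        exact not_adj_comp hxA hus' huA hadj
      have hxv_adj : G.Adj x v := by
        obtain ⟨u, hu, hadj⟩ := exists_adj hs (by omega) hxs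
        have heq := hxnb u hu hadj
        rwa [heq] at hadj
      have hconnex : Conn G (s.erase x) := by
        have hvx : v ∈ s.erase x := Finset.mem_erase.mpr ⟨fun h => hxv h.symm, hvs⟩
        refine conn_of_reach hvx ?_
        intro b hb
        have hbs : b ∈ s := Finset.mem_of_mem_erase hb
        have hbx : b ≠ x := (Finset.mem_erase.mp hb).1
        rcases eq_or_ne b v with rfl | hbv
        · exact Relation.ReflTransGen.refl
        · have hbs' : b ∈ s.erase v := Finset.mem_erase.mpr ⟨hbv, hbs⟩
          have hxB : x ∉ comp G (s.erase v) b := by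
            intro hxB
            have hrw1 : RW G (s.erase v) a x := (mem_comp.mp hxA).2
            have hrw2 : RW G (s.erase v) b x := (mem_comp.mp hxB).2
            have hbA : b ∈ A := mem_comp.mpr ⟨hbs', hrw1.trans (rw_symm hrw2)⟩
            rw [hAx] at hbA
            exact hbx (Finset.mem_singleton.mp hbA)
          have hBsubx : comp G (s.erase v) b ⊆ s.erase x := fun u hu =>
            Finset.mem_erase.mpr ⟨fun h => hxB (h ▸ hu),
              Finset.mem_of_mem_erase (comp_subset hu)⟩
          obtain ⟨u, hu, huu, hadj⟩ := firsthit hbv (hs.2 b hbs v hvs)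
          have huB : u ∈ comp G (s.erase v) b := mem_comp.mpr ⟨hu, huu⟩
          have hrbu : RW G (comp G (s.erase v) b) b u := rw_comp hbs' huu
          exact (rw_mono hBsubx hrbu).tail ⟨hBsubx huB, hvx, hadj⟩
      have hPx : ∀ t, t ⊆ s → Ind G t → t.card = alph G s → x ∈ t := hPK x hxs hconnex
      -- the rest of the graph
      set s2 := (s.erase v).erase x with hs2
      have hs2s : s2 ⊆ s := fun u hu =>
        Finset.mem_of_mem_erase (Finset.mem_of_mem_erase hu)
      have hvs2 : v ∉ s2 := fun h =>
        Finset.notMem_erase v s (Finset.mem_of_mem_erase h)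
      have hxs2 : x ∉ s2 := Finset.notMem_erase x _
      have hs2card : s2.card + 2 = s.card := by
        rw [hs2, Finset.card_erase_of_mem hxs', Finset.card_erase_of_mem hvs]
        omega
      have hs2ne : s2.Nonempty := by
        by_contra hempty
        rw [Finset.not_nonempty_iff_eq_empty] at hempty
        have h1 : s.erase v = {x} := by
          have h0 := Finset.insert_erase hxs'
          rw [← hs2] at h0
          rw [← h0, hempty]
          rfl
        refine hcv ⟨⟨x, by rw [h1]; exact Finset.mem_singleton_self x⟩, ?_⟩
        intro p hp q hq
        rw [h1, Finset.mem_singleton] at hp hq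
        subst hp; subst hq
        exact Relation.ReflTransGen.refl
      set CC := s2.image (fun b => comp G s2 b) with hCC
      have hCrep : ∀ B ∈ CC, ∃ b ∈ s2, comp G s2 b = B := by
        intro B hB
        obtain ⟨b, hb, hbB⟩ := Finset.mem_image.mp hB
        exact ⟨b, hb, hbB⟩
      have hBsub : ∀ B ∈ CC, B ⊆ s2 := by
        intro B hB; obtain ⟨b, hb, rfl⟩ := hCrep B hB; exact comp_subset
      have hBconn : ∀ B ∈ CC, Conn G B := by
        intro B hB; obtain ⟨b, hb, rfl⟩ := hCrep B hB; exact conn_comp hb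
      have hCofmem : ∀ B ∈ CC, ∀ u ∈ B, comp G s2 u = B := by
        intro B hB u hu; obtain ⟨b, hb, rfl⟩ := hCrep B hB; exact (comp_eq hu).symm
      have hdisj : ∀ B ∈ CC, ∀ B' ∈ CC, B ≠ B' → Disjoint B B' := by
        intro B hB B' hB' hne
        rw [Finset.disjoint_left]
        intro u hu hu'
        exact hne ((hCofmem B hB u hu).symm.trans (hCofmem B' hB' u hu'))
      have hcover : ∀ u ∈ s2, ∃ B ∈ CC, u ∈ B := fun u hu =>
        ⟨comp G s2 u, Finset.mem_image_of_mem _ hu, mem_comp_self hu⟩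
      have hbiUnion : CC.biUnion id = s2 := by
        ext u
        simp only [Finset.mem_biUnion, id]
        constructor
        · rintro ⟨B, hB, hu⟩; exact hBsub B hB hu
        · intro hu; exact hcover u hu
      have hs2sum : s2.card = ∑ B ∈ CC, B.card := by
        rw [← hbiUnion]
        exact Finset.card_biUnion (fun B hB B' hB' hne => hdisj B hB B' hB' hne)
      have hattach : ∀ B ∈ CC, ∃ u ∈ B, G.Adj u v := by
        intro B hB
        obtain ⟨b, hb, rfl⟩ := hCrep B hB
        have hbs : b ∈ s := hs2s hb
        have hbv : b ≠ v := fun h => hvs2 (h ▸ hb)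
        obtain ⟨u, hu, huu, hadj⟩ := firsthit hbv (hs.2 b hbs v hvs)
        have hbs' : b ∈ s.erase v := Finset.mem_erase.mpr ⟨hbv, hbs⟩
        have hxB : x ∉ comp G (s.erase v) b := by
          intro hxB
          have hrw1 : RW G (s.erase v) a x := (mem_comp.mp hxA).2
          have hrw2 : RW G (s.erase v) b x := (mem_comp.mp hxB).2
          have hbA : b ∈ A := mem_comp.mpr ⟨hbs', hrw1.trans (rw_symm hrw2)⟩
          rw [hAx] at hbA
          exact hxs2 ((Finset.mem_singleton.mp hbA) ▸ hb)
        have hBsub2 : comp G (s.erase v) b ⊆ s2 := fun w hw =>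
          Finset.mem_erase.mpr ⟨fun h => hxB (h ▸ hw), comp_subset hw⟩
        have huB : u ∈ comp G (s.erase v) b := mem_comp.mpr ⟨hu, huu⟩
        have hrw : RW G s2 b u := rw_mono hBsub2 (rw_comp hbs' huu)
        exact ⟨u, mem_comp.mpr ⟨hBsub2 huB, hrw⟩, hadj⟩
      have hcross : ∀ B ∈ CC, ∀ B' ∈ CC, B ≠ B' → ∀ p ∈ B, ∀ q ∈ B', ¬ G.Adj p q := by
        intro B hB B' hB' hne p hp q hq
        have hqs2 : q ∈ s2 := hBsub B' hB' hq
        have hqB : q ∉ B := fun h =>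
          hne ((hCofmem B hB q h).symm.trans (hCofmem B' hB' q hq))
        obtain ⟨b, hb, rfl⟩ := hCrep B hB
        exact not_adj_comp hp hqs2 hqB
      have hxnadj : ∀ u ∈ s2, ¬ G.Adj x u := by
        intro u hu hadj
        exact hvs2 ((hxnb u (hs2s hu) hadj) ▸ hu)
      -- gluing independent sets
      have hglue : ∀ (g : Finset V → Finset V), (∀ B ∈ CC, g B ⊆ B) →
          (∀ B ∈ CC, Ind G (g B)) →
          Ind G (CC.biUnion g) ∧ (CC.biUnion g).card = ∑ B ∈ CC, (g B).card ∧
            CC.biUnion g ⊆ s2 := by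
        intro g hg1 hg2
        refine ⟨?_, ?_, ?_⟩
        · intro p hp q hq hne
          obtain ⟨B, hB, hpB⟩ := Finset.mem_biUnion.mp hp
          obtain ⟨B', hB', hqB⟩ := Finset.mem_biUnion.mp hq
          rcases eq_or_ne B B' with rfl | hBB
          · exact hg2 B hB p hpB q hqB hne
          · exact hcross B hB B' hB' hBB p (hg1 B hB hpB) q (hg1 B' hB' hqB)
        · exact Finset.card_biUnion (fun B hB B' hB' hne =>
            Finset.disjoint_of_subset_left (hg1 B hB)
              (Finset.disjoint_of_subset_right (hg1 B' hB') (hdisj B hB B' hB' hne)))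
        · intro u hu
          obtain ⟨B, hB, huB⟩ := Finset.mem_biUnion.mp hu
          exact hBsub B hB (hg1 B hB huB)
      choose pick hpick1 hpick2 hpick3 using fun (B : Finset V) => exists_alph G B
      -- alph s = 1 + sum of alph over components
      have hsum_ge : 1 + ∑ B ∈ CC, alph G B ≤ alph G s := by
        obtain ⟨hindU, hcardU, hsubU⟩ := hglue pick (fun B _ => hpick1 B) (fun B _ => hpick2 B)
        have hxnot : x ∉ CC.biUnion pick := fun h => hxs2 (hsubU h)
        have hcardT : (insert x (CC.biUnion pick)).card = 1 + ∑ B ∈ CC, alph G B := by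
          rw [Finset.card_insert_of_notMem hxnot, hcardU]
          have : ∑ B ∈ CC, (pick B).card = ∑ B ∈ CC, alph G B :=
            Finset.sum_congr rfl (fun B _ => hpick3 B)
          omega
        rw [← hcardT]
        refine alph_le ?_ ?_
        · intro u hu
          rcases Finset.mem_insert.mp hu with rfl | hu2
          · exact hxs
          · exact hs2s (hsubU hu2)
        · intro p hp q hq hne
          rcases Finset.mem_insert.mp hp with rfl | hp2
          · rcases Finset.mem_insert.mp hq with rfl | hq2
            · exact absurd rfl hne
            · exact hxnadj q (hsubU hq2)
          · rcases Finset.mem_insert.mp hq with rfl | hq2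
            · exact fun hadj => hxnadj p (hsubU hp2) hadj.symm
            · exact hindU p hp2 q hq2 hne
      have hsum_le : alph G s ≤ 1 + ∑ B ∈ CC, alph G B := by
        obtain ⟨t, hts, hti, htc⟩ := exists_alph G s
        have hxt : x ∈ t := hPx t hts hti htc
        have hvt : v ∉ t := fun hvt => hti x hxt v hvt hxv hxv_adj
        have htsub : t.erase x ⊆ s2 := by
          intro u hu
          have hut : u ∈ t := Finset.mem_of_mem_erase hu
          have hux : u ≠ x := (Finset.mem_erase.mp hu).1
          have huv : u ≠ v := fun h => hvt (h ▸ hut)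
          exact Finset.mem_erase.mpr ⟨hux, Finset.mem_erase.mpr ⟨huv, hts hut⟩⟩
        have hsplit : t.erase x = CC.biUnion (fun B => (t.erase x) ∩ B) := by
          ext u
          simp only [Finset.mem_biUnion, Finset.mem_inter]
          constructor
          · intro hu
            obtain ⟨B, hB, huB⟩ := hcover u (htsub hu)
            exact ⟨B, hB, hu, huB⟩
          · rintro ⟨B, hB, hu, -⟩; exact hu
        have hdisj3 : ∀ B ∈ CC, ∀ B' ∈ CC, B ≠ B' →
            Disjoint ((t.erase x) ∩ B) ((t.erase x) ∩ B') := fun B hB B' hB' hne =>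
          Finset.disjoint_of_subset_left Finset.inter_subset_right
            (Finset.disjoint_of_subset_right Finset.inter_subset_right (hdisj B hB B' hB' hne))
        have hc1 : (t.erase x).card = ∑ B ∈ CC, ((t.erase x) ∩ B).card := by
          conv_lhs => rw [hsplit]
          exact Finset.card_biUnion hdisj3
        have hterm : ∀ B ∈ CC, ((t.erase x) ∩ B).card ≤ alph G B := fun B hB =>
          alph_le Finset.inter_subset_right
            (ind_subset (Finset.inter_subset_left.trans (Finset.erase_subset x t)) hti)
        have hsumle := Finset.sum_le_sum hterm
        have hcx : (t.erase x).card + 1 = t.card := Finset.card_erase_add_one hxt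
        omega
      have halph : alph G s = 1 + ∑ B ∈ CC, alph G B := le_antisymm hsum_le hsum_ge
      -- structure of removable vertices of components
      have hEB : ∀ B ∈ CC, ∀ z ∈ Erem G B, ∀ u ∈ B, G.Adj u v → u = z := by
        intro B hB z hzE u huB hadj
        by_contra huz
        rw [mem_Erem] at hzE
        obtain ⟨hzB, hzconn, hzalph⟩ := hzE
        have hzs2 : z ∈ s2 := hBsub B hB hzB
        have hzs : z ∈ s := hs2s hzs2
        have hzx : z ≠ x := fun h => hxs2 (h ▸ hzs2)
        have hzv : z ≠ v := fun h => hvs2 (h ▸ hzs2)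
        have hvz : v ∈ s.erase z := Finset.mem_erase.mpr ⟨fun h => hzv h.symm, hvs⟩
        have hconnz : Conn G (s.erase z) := by
          refine conn_of_reach hvz ?_
          intro b hb
          have hbs : b ∈ s := Finset.mem_of_mem_erase hb
          have hbz : b ≠ z := (Finset.mem_erase.mp hb).1
          rcases eq_or_ne b v with rfl | hbv
          · exact Relation.ReflTransGen.refl
          rcases eq_or_ne b x with rfl | hbx
          · exact Relation.ReflTransGen.single ⟨hb, hvz, hxv_adj⟩
          have hbs2 : b ∈ s2 :=
            Finset.mem_erase.mpr ⟨hbx, Finset.mem_erase.mpr ⟨hbv, hbs⟩⟩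
          obtain ⟨B', hB', hbB'⟩ := hcover b hbs2
          rcases eq_or_ne B' B with rfl | hBB
          · have hbBz : b ∈ B'.erase z := Finset.mem_erase.mpr ⟨hbz, hbB'⟩
            have huBz : u ∈ B'.erase z := Finset.mem_erase.mpr ⟨huz, huB⟩
            have hrw2 : RW G (B'.erase z) b u := hzconn.2 b hbBz u huBz
            have hsubz : B'.erase z ⊆ s.erase z := by
              intro w hw
              exact Finset.mem_erase.mpr ⟨(Finset.mem_erase.mp hw).1,
                hs2s (hBsub _ hB (Finset.mem_of_mem_erase hw))⟩
            exact (rw_mono hsubz hrw2).tail ⟨hsubz huBz, hvz, hadj⟩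
          · obtain ⟨u', hu'B, hadj'⟩ := hattach B' hB'
            have hzB' : z ∉ B' := fun h =>
              (Finset.disjoint_left.mp (hdisj B' hB' B hB hBB)) h hzB
            have hsubz : B' ⊆ s.erase z := fun w hw =>
              Finset.mem_erase.mpr ⟨fun h => hzB' (h ▸ hw), hs2s (hBsub B' hB' hw)⟩
            have hrw2 : RW G B' b u' := (hBconn B' hB').2 b hbB' u' hu'B
            exact (rw_mono hsubz hrw2).tail ⟨hsubz hu'B, hvz, hadj'⟩
        -- witness independent set avoiding z
        obtain ⟨tz, htz1, htz2, htz3⟩ := exists_alph G (B.erase z)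
        set g := fun B' => if B' = B then tz else pick B' with hg
        have hg1 : ∀ B' ∈ CC, g B' ⊆ B' := by
          intro B' hB'
          show (if B' = B then tz else pick B') ⊆ B'
          by_cases hBB : B' = B
          · rw [if_pos hBB]; subst hBB; exact htz1.trans (Finset.erase_subset _ _)
          · rw [if_neg hBB]; exact hpick1 B'
        have hg2 : ∀ B' ∈ CC, Ind G (g B') := by
          intro B' hB'
          show Ind G (if B' = B then tz else pick B')
          by_cases hBB : B' = B
          · rw [if_pos hBB]; exact htz2
          · rw [if_neg hBB]; exact hpick2 B'
        obtain ⟨hindU, hcardU, hsubU⟩ := hglue g hg1 hg2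
        have hxnot : x ∉ CC.biUnion g := fun h => hxs2 (hsubU h)
        have hzcard : ∑ B' ∈ CC, (g B').card = ∑ B' ∈ CC, alph G B' := by
          refine Finset.sum_congr rfl (fun B' hB' => ?_)
          show (if B' = B then tz else pick B').card = alph G B'
          by_cases hBB : B' = B
          · rw [if_pos hBB, htz3, hzalph, hBB]
          · rw [if_neg hBB]; exact hpick3 B'
        set T := insert x (CC.biUnion g) with hT
        have hTcard : T.card = alph G s := by
          rw [hT, Finset.card_insert_of_notMem hxnot, hcardU, hzcard, halph]
          omega
        have hTsub : T ⊆ s.erase z := by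
          intro u hu
          rcases Finset.mem_insert.mp hu with rfl | hu2
          · exact Finset.mem_erase.mpr ⟨fun h => hzx h.symm, hxs⟩
          · have hu3 := hsubU hu2
            refine Finset.mem_erase.mpr ⟨?_, hs2s hu3⟩
            intro h
            subst h
            obtain ⟨B', hB', huB'⟩ := Finset.mem_biUnion.mp hu2
            rcases eq_or_ne B' B with rfl | hBB
            · have hutz : u ∈ tz := by
                have huB'' : u ∈ (if B' = B' then tz else pick B') := huB'
                rwa [if_pos rfl] at huB''
              exact Finset.notMem_erase u B' (htz1 hutz)
            · have : u ∈ B' := hg1 B' hB' huB'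
              exact (Finset.disjoint_left.mp (hdisj B' hB' B hB hBB)) this hzB
        have hTind : Ind G T := by
          intro p hp q hq hne
          rcases Finset.mem_insert.mp hp with rfl | hp2
          · rcases Finset.mem_insert.mp hq with rfl | hq2
            · exact absurd rfl hne
            · exact hxnadj q (hsubU hq2)
          · rcases Finset.mem_insert.mp hq with rfl | hq2
            · exact fun hadj' => hxnadj p (hsubU hp2) hadj'.symm
            · exact hindU p hp2 q hq2 hne
        have halphz : alph G (s.erase z) = alph G s :=
          le_antisymm (alph_mono (Finset.erase_subset _ _))
            (by rw [← hTcard]; exact alph_le hTsub hTind)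
        have : z ∈ Erem G s := mem_Erem.mpr ⟨hzs, hconnz, halphz⟩
        simp [hEe] at this
      have hEcard1 : ∀ B ∈ CC, (Erem G B).card ≤ 1 := by
        intro B hB
        by_contra hgt
        push_neg at hgt
        obtain ⟨z1, hz1, z2, hz2, hz12⟩ := Finset.one_lt_card.mp hgt
        obtain ⟨u, huB, hadj⟩ := hattach B hB
        exact hz12 ((hEB B hB z1 hz1 u huB hadj).symm.trans (hEB B hB z2 hz2 u huB hadj))
      have hex0 : ∃ B0 ∈ CC, Erem G B0 = ∅ := by
        by_contra hnone
        push_neg at hnone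
        have hnoE : ∀ B ∈ CC, (Erem G B).Nonempty := fun B hB =>
          hnone B hB
        have hgex : ∀ B : Finset V, ∃ t : Finset V,
            B ∈ CC → ∃ zB, zB ∈ Erem G B ∧ t ⊆ B.erase zB ∧ Ind G t ∧ t.card = alph G B := by
          intro B
          by_cases hB : B ∈ CC
          · obtain ⟨zB, hzB⟩ := hnoE B hB
            obtain ⟨t, ht1, ht2, ht3⟩ := exists_alph G (B.erase zB)
            refine ⟨t, fun _ => ⟨zB, hzB, ht1, ht2, ?_⟩⟩
            rw [ht3, (mem_Erem.mp hzB).2.2]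
          · exact ⟨∅, fun h => absurd h hB⟩
        choose g2 hg2 using hgex
        have hg2sub : ∀ B ∈ CC, g2 B ⊆ B := by
          intro B hB
          obtain ⟨zB, -, h1, -, -⟩ := hg2 B hB
          exact h1.trans (Finset.erase_subset _ _)
        have hg2ind : ∀ B ∈ CC, Ind G (g2 B) := by
          intro B hB
          obtain ⟨zB, -, -, h2, -⟩ := hg2 B hB
          exact h2
        obtain ⟨hindU, hcardU, hsubU⟩ := hglue g2 hg2sub hg2ind
        have hvnot : v ∉ CC.biUnion g2 := fun h => hvs2 (hsubU h)
        set T := insert v (CC.biUnion g2) with hT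
        have hTcard : T.card = alph G s := by
          rw [hT, Finset.card_insert_of_notMem hvnot, hcardU, halph]
          have : ∑ B ∈ CC, (g2 B).card = ∑ B ∈ CC, alph G B := by
            refine Finset.sum_congr rfl (fun B hB => ?_)
            obtain ⟨zB, -, -, -, h3⟩ := hg2 B hB
            exact h3
          omega
        have hTsub : T ⊆ s := by
          intro u hu
          rcases Finset.mem_insert.mp hu with rfl | hu2
          · exact hvs
          · exact hs2s (hsubU hu2)
        have hTind : Ind G T := by
          intro p hp q hq hne
          rcases Finset.mem_insert.mp hp with rfl | hp2
          · rcases Finset.mem_insert.mp hq with rfl | hq2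
            · exact absurd rfl hne
            · intro hadj
              obtain ⟨B, hB, hqB⟩ := Finset.mem_biUnion.mp hq2
              obtain ⟨zB, hzB, h1, -, -⟩ := hg2 B hB
              have heq := hEB B hB zB hzB q (hg2sub B hB hqB) hadj.symm
              have hq3 : q ∈ B.erase zB := h1 hqB
              rw [← heq] at hq3
              exact Finset.notMem_erase q B hq3
          · rcases Finset.mem_insert.mp hq with rfl | hq2
            · intro hadj
              obtain ⟨B, hB, hpB⟩ := Finset.mem_biUnion.mp hp2
              obtain ⟨zB, hzB, h1, -, -⟩ := hg2 B hB
              have heq := hEB B hB zB hzB p (hg2sub B hB hpB) hadj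
              have hp3 : p ∈ B.erase zB := h1 hpB
              rw [← heq] at hp3
              exact Finset.notMem_erase p B hp3
            · exact hindU p hp2 q hq2 hne
        have hxT : x ∈ T := hPx T hTsub hTind hTcard
        rcases Finset.mem_insert.mp hxT with h | h
        · exact hxv h
        · exact hxs2 (hsubU h)
      obtain ⟨B0, hB0, hB0E⟩ := hex0
      have hEsum : (∑ B ∈ CC, (Erem G B).card) + 1 ≤ CC.card := by
        have h1 : ∑ B ∈ CC, (Erem G B).card = ∑ B ∈ CC.erase B0, (Erem G B).card := by
          rw [← Finset.sum_erase_add _ _ hB0, hB0E]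
          simp
        have h2 : ∑ B ∈ CC.erase B0, (Erem G B).card ≤ (CC.erase B0).card := by
          have := Finset.sum_le_card_nsmul (CC.erase B0) (fun B => (Erem G B).card) 1
            (fun B hB => hEcard1 B (Finset.mem_of_mem_erase hB))
          simpa using this
        have h3 : (CC.erase B0).card + 1 = CC.card := Finset.card_erase_add_one hB0
        omega
      have hIH : ∀ B ∈ CC, B.card + 1 ≤ 2 * alph G B + (Erem G B).card := by
        intro B hB
        refine ih B ?_ (hBconn B hB)
        have h4 := Finset.card_le_card (hBsub B hB)
        omega
      have hsumIH : ∑ B ∈ CC, (B.card + 1) ≤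
          ∑ B ∈ CC, (2 * alph G B + (Erem G B).card) := Finset.sum_le_sum hIH
      have e1 : ∑ B ∈ CC, (B.card + 1) = (∑ B ∈ CC, B.card) + CC.card := by
        rw [Finset.sum_add_distrib, Finset.sum_const, smul_eq_mul, mul_one]
      have e2 : ∑ B ∈ CC, (2 * alph G B + (Erem G B).card) =
          2 * (∑ B ∈ CC, alph G B) + ∑ B ∈ CC, (Erem G B).card := by
        rw [Finset.sum_add_distrib, Finset.mul_sum]
      rw [hEe]
      rw [e1, e2] at hsumIH
      simp only [Finset.card_empty, add_zero]
      omega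

end AlphaAux

namespace AlphaAux
variable {V : Type*} {G : SimpleGraph V} [DecidableEq V]

theorem main_fin : ∀ (n : ℕ) (s : Finset V), s.card ≤ n → Conn G s →
    ∃ u, u ⊆ s ∧ Conn G u ∧ alph G u = alph G s ∧ u.card + 1 ≤ 2 * alph G s := by
  intro n
  induction n with
  | zero =>
      intro s h hs
      obtain ⟨a, ha⟩ := hs.1
      rw [Nat.le_zero, Finset.card_eq_zero] at h
      simp [h] at ha
  | succ n ih =>
    intro s hcard hs
    by_cases hle : s.card + 1 ≤ 2 * alph G s
    · exact ⟨s, Finset.Subset.refl s, hs, rfl, hle⟩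
    · have hb := mainBound (n+1) s hcard hs
      have hEne : (Erem G s).Nonempty := by
        rw [← Finset.card_pos]; omega
      obtain ⟨z, hz⟩ := hEne
      rw [mem_Erem] at hz
      obtain ⟨hzs, hzc, hza⟩ := hz
      obtain ⟨u, hu1, hu2, hu3, hu4⟩ := ih (s.erase z)
        (by rw [Finset.card_erase_of_mem hzs]; omega) hzc
      exact ⟨u, hu1.trans (Finset.erase_subset _ _), hu2, by rw [hu3, hza],
        by rw [← hza]; exact hu4⟩

end AlphaAux


/-- Every connected graph `G` has a connected induced subgraph `H` with
`α(H) = α(G)` and `|V(H)| ≤ 2α(G) − 1`. -/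
theorem exists_small_connected_induced_subgraph {V : Type*} [Fintype V]
    (G : SimpleGraph V) (hG : G.Connected) :
    ∃ U : Set V, (G.induce U).Connected ∧ indepNum (G.induce U) = indepNum G ∧
      U.ncard ≤ 2 * indepNum G - 1 := by
  classical
  obtain ⟨u, -, hu2, hu3, hu4⟩ := AlphaAux.main_fin (Finset.univ : Finset V).card
    (Finset.univ : Finset V) le_rfl (AlphaAux.conn_univ hG)
  refine ⟨(↑u : Set V), ?_, ?_, ?_⟩
  · exact (AlphaAux.conn_iff u).mpr hu2
  · rw [AlphaAux.indepNum_induce, hu3, ← AlphaAux.indepNum_eq_alph_univ]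
  · rw [Set.ncard_coe_finset, AlphaAux.indepNum_eq_alph_univ (G := G)]
    omega
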